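/- Assume σ is d-dimensional and there exists ω ∈ σ^∨ ∩ ℤ^d with ⟨ω, v_j⟩ = 1 for all j = 1, …, n (the Gorenstein condition for the toric ring). Let A = {ω}. Then P(A) = ω + σ^∨ ⊆ Q(m), and sup_{u ∈ σ^∨ \ Q(m)} λ_A(u) = sup_{u ∈ σ^∨ \ O} λ_A(u) = 1; consequently the F-pure threshold and the F-threshold with respect to m of the principal monomial ideal (X^ω) coincide and equal 1. -/

import Mathlib

open Finset Filter Pointwise

noncomputable section

namespace Paper

variable {d n : ℕ}

/-- The standard inner product pairing on `ℝ^d`. -/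
def pair (u w : Fin d → ℝ) : ℝ := ∑ i, u i * w i

/-- The coercion `ℤ^d → ℝ^d`. -/
def toR (u : Fin d → ℤ) : Fin d → ℝ := fun i => (u i : ℝ)

/-- The cone generated by the integer vectors `v 1, …, v n`. -/
def cone (v : Fin n → Fin d → ℤ) : Set (Fin d → ℝ) :=
  {x | ∃ c : Fin n → ℝ, (∀ j, 0 ≤ c j) ∧ x = ∑ j, c j • toR (v j)}

/-- The dual cone `σ^∨ = {u | ⟨u, x⟩ ≥ 0 for all x ∈ σ}`. -/
def dualCone (v : Fin n → Fin d → ℤ) : Set (Fin d → ℝ) :=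
  {u | ∀ x ∈ cone v, 0 ≤ pair u x}

/-- Strong convexity of the cone generated by `v`. -/
def StronglyConvex (v : Fin n → Fin d → ℤ) : Prop :=
  ∀ x ∈ cone v, -x ∈ cone v → x = 0

/-- An integer vector is primitive if the gcd of its coordinates is 1. -/
def IsPrimitive (w : Fin d → ℤ) : Prop := Finset.univ.gcd w = 1

/-- The cone generated by `v` is `d`-dimensional. -/
def FullDim (v : Fin n → Fin d → ℤ) : Prop :=
  Submodule.span ℝ (Set.range fun j => toR (v j)) = ⊤

/-- The Newton polyhedron `P(A) = conv(A) + σ^∨`. -/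
def newton (v : Fin n → Fin d → ℤ) (A : Finset (Fin d → ℤ)) : Set (Fin d → ℝ) :=
  convexHull ℝ (toR '' ↑A) + dualCone v

/-- The set `Q(A) = ⋃_{a ∈ A} (a + σ^∨)`. -/
def QSet (v : Fin n → Fin d → ℤ) (A : Finset (Fin d → ℤ)) : Set (Fin d → ℝ) :=
  ⋃ a ∈ A, (toR a +ᵥ dualCone v)

/-- `λ_A(u) = sup {λ > 0 | u ∈ λ·P(A)}` (and `0` if no such `λ` exists;
note `Real.sSup` of the empty set is `0`). -/
def lam (v : Fin n → Fin d → ℤ) (A : Finset (Fin d → ℤ)) (u : Fin d → ℝ) : ℝ :=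
  sSup {l : ℝ | 0 < l ∧ u ∈ l • newton v A}

/-- `Q(m)` for the maximal monomial ideal, whose exponent set is
`(σ^∨ ∩ ℤ^d) \ {0}`. -/
def Qm (v : Fin n → Fin d → ℤ) : Set (Fin d → ℝ) :=
  ⋃ a ∈ {a : Fin d → ℤ | toR a ∈ dualCone v ∧ a ≠ 0}, (toR a +ᵥ dualCone v)

/-- The set `O = {u ∈ σ^∨ | ⟨u, v_j⟩ ≥ 1 for some j}`. -/
def OSet (v : Fin n → Fin d → ℤ) : Set (Fin d → ℝ) :=
  {u ∈ dualCone v | ∃ j, 1 ≤ pair u (toR (v j))}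


/-! ### Auxiliary lemmas -/

lemma pair_add_left (u w x : Fin d → ℝ) : pair (u + w) x = pair u x + pair w x := by
  simp [pair, add_mul, Finset.sum_add_distrib]

lemma pair_neg_left (u x : Fin d → ℝ) : pair (-u) x = -pair u x := by
  simp [pair, Finset.sum_neg_distrib]

lemma pair_sub_left (u w x : Fin d → ℝ) : pair (u - w) x = pair u x - pair w x := by
  simp [pair, sub_mul, Finset.sum_sub_distrib]

lemma pair_smul_left (c : ℝ) (u x : Fin d → ℝ) : pair (c • u) x = c * pair u x := by
  simp [pair, Finset.mul_sum, mul_assoc]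

lemma pair_zero_left (x : Fin d → ℝ) : pair 0 x = 0 := by simp [pair]

lemma pair_sum_right (u : Fin d → ℝ) (g : Fin n → Fin d → ℝ) :
    pair u (∑ j, g j) = ∑ j, pair u (g j) := by
  simp only [pair, Finset.sum_apply, Finset.mul_sum]
  exact Finset.sum_comm

lemma pair_smul_right (u : Fin d → ℝ) (c : ℝ) (x : Fin d → ℝ) :
    pair u (c • x) = c * pair u x := by
  simp [pair, Finset.mul_sum, mul_left_comm]

lemma mem_cone_gen (v : Fin n → Fin d → ℤ) (j : Fin n) : toR (v j) ∈ cone v := by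
  refine ⟨Pi.single j 1, fun k => ?_, ?_⟩
  · by_cases h : k = j <;> simp [Pi.single_apply, h]
  · rw [Finset.sum_eq_single j]
    · simp
    · intro b _ hb; simp [Pi.single_eq_of_ne hb]
    · simp

lemma mem_dualCone_iff (v : Fin n → Fin d → ℤ) (u : Fin d → ℝ) :
    u ∈ dualCone v ↔ ∀ j, 0 ≤ pair u (toR (v j)) := by
  constructor
  · intro h j; exact h _ (mem_cone_gen v j)
  · rintro h x ⟨c, hc, rfl⟩
    rw [pair_sum_right]
    refine Finset.sum_nonneg fun j _ => ?_
    rw [pair_smul_right]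
    exact mul_nonneg (hc j) (h j)

lemma newton_singleton (v : Fin n → Fin d → ℤ) (ω : Fin d → ℤ) :
    newton v {ω} = toR ω +ᵥ dualCone v := by
  rw [newton]
  simp only [Finset.coe_singleton, Set.image_singleton, convexHull_singleton]
  rw [Set.singleton_add]
  rfl

lemma mem_smul_newton (v : Fin n → Fin d → ℤ) (ω : Fin d → ℤ)
    (hω : ∀ j, pair (toR ω) (toR (v j)) = 1)
    {l : ℝ} (hl : 0 < l) (u : Fin d → ℝ) :
    u ∈ l • newton v {ω} ↔ ∀ j, l ≤ pair u (toR (v j)) := by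
  rw [newton_singleton, Set.mem_smul_set_iff_inv_smul_mem₀ hl.ne',
    Set.mem_vadd_set_iff_neg_vadd_mem]
  have hvadd : (-toR ω +ᵥ l⁻¹ • u) = -toR ω + l⁻¹ • u := rfl
  rw [hvadd, mem_dualCone_iff]
  have hll : l * l⁻¹ = 1 := mul_inv_cancel₀ hl.ne'
  constructor <;> intro h j <;> have hj := h j <;>
    rw [pair_add_left, pair_neg_left, pair_smul_left, hω j] at * <;>
    nlinarith [hj, hl, hll]

lemma sup_eq_one {S : Set ℝ} (hub : ∀ x ∈ S, x ≤ 1)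
    (hmem : ∀ t : ℝ, 0 < t → t < 1 → t ∈ S) : sSup S = 1 := by
  have hbdd : BddAbove S := ⟨1, fun x hx => hub x hx⟩
  refine le_antisymm (Real.sSup_le hub zero_le_one) ?_
  by_contra h
  push_neg at h
  rcases le_or_gt (sSup S) (1/2) with h1 | h1
  · have := le_csSup hbdd (hmem (3/4) (by norm_num) (by norm_num)); linarith
  · have h2 := le_csSup hbdd (hmem ((sSup S + 1)/2) (by linarith) (by linarith)); linarith

/-- in the Gorenstein case (there is a lattice point `ω ∈ σ^∨`
with `⟨ω, v_j⟩ = 1` for all `j`), for `A = {ω}` one has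
`P(A) = ω + σ^∨ ⊆ Q(m)` and both `sup_{u ∈ σ^∨ \ Q(m)} λ_A(u)` (the
F-threshold `c^m`) and `sup_{u ∈ σ^∨ \ O} λ_A(u)` (the F-pure threshold)
equal `1`. -/
theorem gorenstein_fpt_eq_fthreshold
    (d n : ℕ) (hd : 1 ≤ d)
    (v : Fin n → Fin d → ℤ)
    (hsc : StronglyConvex v) (hprim : ∀ j, IsPrimitive (v j))
    (hdim : FullDim v)
    (ω : Fin d → ℤ) (hωl : toR ω ∈ dualCone v)
    (hω : ∀ j, pair (toR ω) (toR (v j)) = 1) :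
    newton v {ω} = toR ω +ᵥ dualCone v ∧
    newton v {ω} ⊆ Qm v ∧
    sSup (lam v {ω} '' (dualCone v \ Qm v)) = 1 ∧
    sSup (lam v {ω} '' (dualCone v \ OSet v)) = 1 := by
  -- `n ≥ 1` from full-dimensionality
  have hn : Nonempty (Fin n) := by
    by_contra hne
    rw [not_nonempty_iff] at hne
    have hr : (Set.range fun j => toR (v j)) = ∅ := Set.range_eq_empty _
    rw [FullDim, hr, Submodule.span_empty] at hdim
    have h1 : (fun _ => (1 : ℝ) : Fin d → ℝ) ∈ (⊥ : Submodule ℝ (Fin d → ℝ)) := by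
      rw [hdim]; exact Submodule.mem_top
    rw [Submodule.mem_bot] at h1
    have := congrFun h1 ⟨0, hd⟩
    simp at this
  haveI := hn
  obtain ⟨j0⟩ := hn
  -- ω ≠ 0
  have hω0 : ω ≠ 0 := by
    intro h0
    have := hω j0
    rw [h0] at this
    have h2 : toR (0 : Fin d → ℤ) = 0 := by funext i; simp [toR]
    rw [h2, pair_zero_left] at this
    norm_num at this
  -- full dimensionality: vanishing pairings ⇒ zero vector
  have hfull : ∀ u : Fin d → ℝ, (∀ j, pair u (toR (v j)) = 0) → u = 0 := by
    intro u hu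
    set f : (Fin d → ℝ) →ₗ[ℝ] ℝ :=
      { toFun := pair u
        map_add' := fun x y => by
          simp [pair, mul_add, Finset.sum_add_distrib]
        map_smul' := fun c x => by
          simp [pair, Finset.mul_sum, mul_left_comm] } with hf
    have hker : Submodule.span ℝ (Set.range fun j => toR (v j)) ≤ LinearMap.ker f := by
      rw [Submodule.span_le]
      rintro x ⟨j, rfl⟩
      exact hu j
    rw [hdim, top_le_iff] at hker
    have hzero : ∀ x : Fin d → ℝ, pair u x = 0 := by
      intro x
      have : x ∈ LinearMap.ker f := hker ▸ Submodule.mem_top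
      exact this
    funext i
    have := hzero (Pi.single i 1)
    rw [pair] at this
    rw [Finset.sum_eq_single i] at this
    · simpa using this
    · intro b _ hb; simp [Pi.single_eq_of_ne hb]
    · simp
  -- lam description
  have hlam : ∀ u : Fin d → ℝ,
      lam v {ω} u = sSup {l : ℝ | 0 < l ∧ ∀ j, l ≤ pair u (toR (v j))} := by
    intro u
    rw [lam]
    congr 1
    ext l
    simp only [Set.mem_setOf_eq, and_congr_right_iff]
    intro hl
    exact mem_smul_newton v ω hω hl u
  -- lam of t • ω
  have hlam_t : ∀ t : ℝ, 0 < t → lam v {ω} (t • toR ω) = t := by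
    intro t ht
    rw [hlam]
    have hset : {l : ℝ | 0 < l ∧ ∀ j, l ≤ pair (t • toR ω) (toR (v j))} = Set.Ioc 0 t := by
      ext l
      simp [pair_smul_left, hω, Set.mem_Ioc]
    rw [hset, csSup_Ioc ht]
  -- upper bound for lam
  have hub : ∀ u : Fin d → ℝ, (∃ j, pair u (toR (v j)) ≤ 1) → lam v {ω} u ≤ 1 := by
    rintro u ⟨j, hj⟩
    rw [hlam]
    refine Real.sSup_le ?_ zero_le_one
    rintro l ⟨hl, h⟩
    exact (h j).trans hj
  -- membership in Qm when all pairings exceed 1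
  have hQm : ∀ u ∈ dualCone v, (∀ j, 1 < pair u (toR (v j))) → u ∈ Qm v := by
    intro u hu hgt
    have hsub : u - toR ω ∈ dualCone v := by
      rw [mem_dualCone_iff]
      intro j
      rw [pair_sub_left, hω j]
      linarith [hgt j]
    refine Set.mem_iUnion₂.mpr ⟨ω, ⟨hωl, hω0⟩, ?_⟩
    rw [Set.mem_vadd_set_iff_neg_vadd_mem]
    have : (-toR ω +ᵥ u) = u - toR ω := by
      show -toR ω + u = u - toR ω
      abel
    rw [this]
    exact hsub
  -- t • ω ∉ Qm for t < 1
  have hnotQm : ∀ t : ℝ, t < 1 → t • toR ω ∉ Qm v := by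
    intro t ht hmem
    rw [Qm, Set.mem_iUnion₂] at hmem
    obtain ⟨a, ⟨ha, ha0⟩, hmem⟩ := hmem
    rw [Set.mem_vadd_set_iff_neg_vadd_mem] at hmem
    have hw : -toR a + t • toR ω ∈ dualCone v := hmem
    have hex : ∃ j, 1 ≤ pair (toR a) (toR (v j)) := by
      by_contra hno
      push_neg at hno
      have hz : ∀ j, pair (toR a) (toR (v j)) = 0 := by
        intro j
        have h0 : (0 : ℝ) ≤ pair (toR a) (toR (v j)) := (mem_dualCone_iff v _).mp ha j
        have hint : pair (toR a) (toR (v j)) = ((∑ i, a i * v j i : ℤ) : ℝ) := by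
          rw [pair]; push_cast [toR]; ring
        have hlt := hno j
        rw [hint] at h0 hlt ⊢
        have h0' : (0 : ℤ) ≤ ∑ i, a i * v j i := by exact_mod_cast h0
        have hlt' : (∑ i, a i * v j i : ℤ) < 1 := by exact_mod_cast hlt
        have : (∑ i, a i * v j i : ℤ) = 0 := by omega
        rw [this]; norm_num
      have hza : toR a = 0 := hfull _ hz
      refine ha0 ?_
      funext i
      have := congrFun hza i
      simpa [toR] using this
    obtain ⟨j, hj⟩ := hex
    have hwj := (mem_dualCone_iff v _).mp hw j
    rw [pair_add_left, pair_neg_left, pair_smul_left, hω j] at hwj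
    linarith
  -- t • ω ∈ dualCone for t ≥ 0
  have hmemdc : ∀ t : ℝ, 0 ≤ t → t • toR ω ∈ dualCone v := by
    intro t ht
    rw [mem_dualCone_iff]
    intro j
    rw [pair_smul_left, hω j]
    linarith
  -- t • ω ∉ O for t < 1
  have hnotO : ∀ t : ℝ, 0 ≤ t → t < 1 → t • toR ω ∉ OSet v := by
    rintro t ht0 ht ⟨-, j, hj⟩
    rw [pair_smul_left, hω j] at hj
    linarith
  refine ⟨newton_singleton v ω, ?_, ?_, ?_⟩
  · -- newton ⊆ Qm
    rw [newton_singleton]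
    rintro u hu
    refine Set.mem_iUnion₂.mpr ⟨ω, ⟨hωl, hω0⟩, hu⟩
  · -- sup over σ^∨ \ Qm
    refine sup_eq_one ?_ ?_
    · rintro x ⟨u, ⟨hu, hnq⟩, rfl⟩
      refine hub u ?_
      by_contra hno
      push_neg at hno
      exact hnq (hQm u hu hno)
    · intro t ht0 ht1
      exact ⟨t • toR ω, ⟨hmemdc t ht0.le, hnotQm t ht1⟩, hlam_t t ht0⟩
  · -- sup over σ^∨ \ O
    refine sup_eq_one ?_ ?_
    · rintro x ⟨u, ⟨hu, hno⟩, rfl⟩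
      refine hub u ⟨j0, ?_⟩
      by_contra hgt
      push_neg at hgt
      exact hno ⟨hu, j0, hgt.le⟩
    · intro t ht0 ht1
      exact ⟨t • toR ω, ⟨hmemdc t ht0.le, hnotO t ht0.le ht1⟩, hlam_t t ht0⟩

end Paper
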